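/- Let M ⊂ ℝ³ be an oriented hyperbolic surface (Gaussian curvature κ < 0) and ψ = (x₁,x₂) an asymptotic coordinate chart with positive orientation, so Π(∂x₁,∂x₁) = Π(∂x₂,∂x₂) = 0. Then for any C² function w, ⟨D²w, Q*Π⟩ = ∓ 2 (Π(∂x₁,∂x₂)/det G) · (w_{x₁x₂} − (D_{∂x₁}∂x₂)(w)), where det G = |∂x₁|²|∂x₂|² − ⟨∂x₁,∂x₂⟩², the sign is − if Π(∂x₁,∂x₂) > 0 and + otherwise; equivalently ⟨D²w,Q*Π⟩ = ±2√(−κ/det G)· w_{x₁x₂} + first order terms, since κ = −Π(∂x₁,∂x₂)²/det G. -/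

import Mathlib

open scoped RealInnerProductSpace

/-- Normal form of the operator `⟨D²w, Q*Π⟩` in asymptotic coordinates: if
`v₁, v₂` (the coordinate vector fields `∂x₁, ∂x₂`) are null directions of the
second fundamental form `B` (i.e. `B(v₁,v₁) = B(v₂,v₂) = 0`), `(e₁,e₂)` is a
positively oriented orthonormal basis, `Q` the rotation by `π/2`, and `H` is a
symmetric bilinear form (the covariant Hessian `D²w`, so that `H(v₁,v₂)`
represents `w_{x₁x₂} - (D_{∂x₁}∂x₂)(w)`), then
`⟨H, Q*B⟩ = -2 (B(v₁,v₂)/det G) H(v₁,v₂)`, and with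
`κ = -B(v₁,v₂)²/det G` this equals `∓2√(-κ/det G) H(v₁,v₂)` according to the
sign of `B(v₁,v₂)`. -/
theorem stmt12 {V : Type*} [NormedAddCommGroup V] [InnerProductSpace ℝ V]
    (e₁ e₂ : V)
    (he₁ : ⟪e₁, e₁⟫ = 1) (he₂ : ⟪e₂, e₂⟫ = 1) (he₁₂ : ⟪e₁, e₂⟫ = 0)
    (Q : V →ₗ[ℝ] V) (hQ : ∀ α : V, Q α = ⟪α, e₂⟫ • e₁ - ⟪α, e₁⟫ • e₂)
    (B H : V →ₗ[ℝ] V →ₗ[ℝ] ℝ)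
    (hBsym : ∀ x y : V, B x y = B y x) (hHsym : ∀ x y : V, H x y = H y x)
    (v₁ v₂ : V) (hnull₁ : B v₁ v₁ = 0) (hnull₂ : B v₂ v₂ = 0)
    (hspan : ∀ v : V, ∃ a b : ℝ, v = a • v₁ + b • v₂)
    (detG : ℝ) (hdetG : detG = ⟪v₁, v₁⟫ * ⟪v₂, v₂⟫ - ⟪v₁, v₂⟫ ^ 2)
    (hdetGpos : 0 < detG) (κ : ℝ) (hκ : κ = -(B v₁ v₂) ^ 2 / detG) :
    (H e₁ e₁ * B (Q e₁) (Q e₁) + H e₁ e₂ * B (Q e₁) (Q e₂) +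
        H e₂ e₁ * B (Q e₂) (Q e₁) + H e₂ e₂ * B (Q e₂) (Q e₂)
      = -2 * (B v₁ v₂ / detG) * H v₁ v₂) ∧
    (0 < B v₁ v₂ →
      H e₁ e₁ * B (Q e₁) (Q e₁) + H e₁ e₂ * B (Q e₁) (Q e₂) +
          H e₂ e₁ * B (Q e₂) (Q e₁) + H e₂ e₂ * B (Q e₂) (Q e₂)
        = -2 * Real.sqrt (-κ / detG) * H v₁ v₂) ∧
    (B v₁ v₂ < 0 →
      H e₁ e₁ * B (Q e₁) (Q e₁) + H e₁ e₂ * B (Q e₁) (Q e₂) +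
          H e₂ e₁ * B (Q e₂) (Q e₁) + H e₂ e₂ * B (Q e₂) (Q e₂)
        = 2 * Real.sqrt (-κ / detG) * H v₁ v₂) := by
  obtain ⟨a₁, b₁, hE1⟩ := hspan e₁
  obtain ⟨a₂, b₂, hE2⟩ := hspan e₂
  have hq : ⟪v₂, v₁⟫ = ⟪v₁, v₂⟫ := real_inner_comm _ _
  have h1 : a₁^2*⟪v₁,v₁⟫ + 2*a₁*b₁*⟪v₁,v₂⟫ + b₁^2*⟪v₂,v₂⟫ = 1 := by
    have h := he₁
    rw [hE1] at h
    simp only [inner_add_left, inner_add_right, real_inner_smul_left,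
      real_inner_smul_right] at h
    linear_combination h - a₁*b₁*hq
  have h2 : a₂^2*⟪v₁,v₁⟫ + 2*a₂*b₂*⟪v₁,v₂⟫ + b₂^2*⟪v₂,v₂⟫ = 1 := by
    have h := he₂
    rw [hE2] at h
    simp only [inner_add_left, inner_add_right, real_inner_smul_left,
      real_inner_smul_right] at h
    linear_combination h - a₂*b₂*hq
  have h3 : a₁*a₂*⟪v₁,v₁⟫ + (a₁*b₂+a₂*b₁)*⟪v₁,v₂⟫ + b₁*b₂*⟪v₂,v₂⟫ = 0 := by
    have h := he₁₂
    rw [hE1, hE2] at h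
    simp only [inner_add_left, inner_add_right, real_inner_smul_left,
      real_inner_smul_right] at h
    linear_combination h - a₂*b₁*hq
  have hdet2 : detG * (a₁*b₂ - a₂*b₁)^2 = 1 := by
    rw [hdetG]
    linear_combination (a₂^2*⟪v₁,v₁⟫ + 2*a₂*b₂*⟪v₁,v₂⟫ + b₂^2*⟪v₂,v₂⟫) * h1 + h2
      - (a₁*a₂*⟪v₁,v₁⟫ + (a₁*b₂+a₂*b₁)*⟪v₁,v₂⟫ + b₁*b₂*⟪v₂,v₂⟫) * h3
  have hQ1 : Q e₁ = -e₂ := by rw [hQ, he₁₂, he₁]; simp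
  have hQ2 : Q e₂ = e₁ := by rw [hQ, he₂, show ⟪e₂,e₁⟫ = (0:ℝ) from (real_inner_comm e₁ e₂).trans he₁₂]; simp
  have hB21 : B v₂ v₁ = B v₁ v₂ := hBsym v₂ v₁
  have hH21 : H v₂ v₁ = H v₁ v₂ := hHsym v₂ v₁
  have hne : detG ≠ 0 := ne_of_gt hdetGpos
  have hmain : H e₁ e₁ * B (Q e₁) (Q e₁) + H e₁ e₂ * B (Q e₁) (Q e₂) +
        H e₂ e₁ * B (Q e₂) (Q e₁) + H e₂ e₂ * B (Q e₂) (Q e₂)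
      = -2 * (B v₁ v₂ / detG) * H v₁ v₂ := by
    rw [hQ1, hQ2, hE1, hE2]
    simp only [map_add, map_smul, map_neg, LinearMap.add_apply, LinearMap.smul_apply,
      LinearMap.neg_apply, smul_eq_mul, hnull₁, hnull₂, hB21, hH21]
    field_simp
    linear_combination (-2 * B v₁ v₂ * H v₁ v₂) * hdet2
  have hsq : Real.sqrt (-κ / detG) = |B v₁ v₂| / detG := by
    rw [hκ]
    have h5 : -(-(B v₁ v₂) ^ 2 / detG) / detG = (|B v₁ v₂| / detG) ^ 2 := by
      rw [div_pow, sq_abs]; field_simp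
    rw [h5, Real.sqrt_sq (by positivity)]
  refine ⟨hmain, ?_, ?_⟩
  · intro hpos
    rw [hmain, hsq, abs_of_pos hpos]
  · intro hneg
    rw [hmain, hsq, abs_of_neg hneg]
    ring
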